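/- Let n ≥ 1, 1 ≤ k ≤ n, and suppose f : {-1,1}^n → {-1,1} satisfies f(x,y) = φ(y)·∏_{i=1}^k (x_i + κ_i) − B for all (x,y) ∈ {-1,1}^k × {-1,1}^{n−k}, where φ : {-1,1}^{n−k} → ℝ and B, κ_1,…,κ_k ∈ ℝ. Assume either φ is not identically zero and k ≥ 2, or φ is nonconstant and k ≥ 1. Then one of the following holds: (1) κ_1 = ⋯ = κ_k = B = 0 and φ takes values in {-1,1}, so f(x,y) = φ(y)·∏_{i=1}^k x_i; or (2) κ_1,…,κ_k, B ∈ {-1,1} and there exists φ̃ : {-1,1}^{n−k} → {0,1} such that f(x,y) = φ̃(y)·2B·∏_{i=1}^k ((κ_i x_i + 1)/2) − B. -/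

import Mathlib

open Finset

private lemma pm_pair {B u v : ℝ} (hu : u = B + 1 ∨ u = B - 1) (hv : v = B + 1 ∨ v = B - 1)
    (huv : u ≠ v) : u + v = 2 * B ∧ (u - v) ^ 2 = 4 := by
  rcases hu with h | h <;> rcases hv with h' | h'
  · exact absurd (h.trans h'.symm) huv
  · subst h; subst h'; constructor <;> ring
  · subst h; subst h'; constructor <;> ring
  · exact absurd (h.trans h'.symm) huv

/-- Classification of Boolean functions of the form
`f(x,y) = φ(y)·∏_{i=1}^k (xᵢ + κᵢ) − B` on `{-1,1}^k × {-1,1}^{n−k}`. -/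
theorem stmt_5 (n k : ℕ) (hn : 1 ≤ n) (hk : 1 ≤ k) (hkn : k ≤ n)
    (f : (Fin k → ℝ) → (Fin (n - k) → ℝ) → ℝ)
    (φ : (Fin (n - k) → ℝ) → ℝ) (B : ℝ) (κ : Fin k → ℝ)
    (hBool : ∀ (x : Fin k → ℝ) (y : Fin (n - k) → ℝ),
      (∀ i, x i = 1 ∨ x i = -1) → (∀ j, y j = 1 ∨ y j = -1) →
      (f x y = 1 ∨ f x y = -1))
    (hf : ∀ (x : Fin k → ℝ) (y : Fin (n - k) → ℝ),
      (∀ i, x i = 1 ∨ x i = -1) → (∀ j, y j = 1 ∨ y j = -1) →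
      f x y = φ y * ∏ i, (x i + κ i) - B)
    (hφ : ((∃ y : Fin (n - k) → ℝ, (∀ j, y j = 1 ∨ y j = -1) ∧ φ y ≠ 0) ∧ 2 ≤ k) ∨
      ((∃ y y' : Fin (n - k) → ℝ, (∀ j, y j = 1 ∨ y j = -1) ∧ (∀ j, y' j = 1 ∨ y' j = -1) ∧
        φ y ≠ φ y') ∧ 1 ≤ k)) :
    ((∀ i, κ i = 0) ∧ B = 0 ∧
      (∀ y : Fin (n - k) → ℝ, (∀ j, y j = 1 ∨ y j = -1) → (φ y = 1 ∨ φ y = -1)) ∧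
      (∀ (x : Fin k → ℝ) (y : Fin (n - k) → ℝ),
        (∀ i, x i = 1 ∨ x i = -1) → (∀ j, y j = 1 ∨ y j = -1) →
        f x y = φ y * ∏ i, x i)) ∨
    ((∀ i, κ i = 1 ∨ κ i = -1) ∧ (B = 1 ∨ B = -1) ∧
      ∃ φt : (Fin (n - k) → ℝ) → ℝ,
        (∀ y : Fin (n - k) → ℝ, (∀ j, y j = 1 ∨ y j = -1) → (φt y = 0 ∨ φt y = 1)) ∧
        ∀ (x : Fin k → ℝ) (y : Fin (n - k) → ℝ),
          (∀ i, x i = 1 ∨ x i = -1) → (∀ j, y j = 1 ∨ y j = -1) →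
          f x y = φt y * (2 * B * ∏ i, ((κ i * x i + 1) / 2)) - B) := by
  classical
  -- the key Boolean constraint
  have key : ∀ (x : Fin k → ℝ) (y : Fin (n - k) → ℝ),
      (∀ i, x i = 1 ∨ x i = -1) → (∀ j, y j = 1 ∨ y j = -1) →
      φ y * ∏ i, (x i + κ i) = B + 1 ∨ φ y * ∏ i, (x i + κ i) = B - 1 := by
    intro x y hx hy
    rcases hBool x y hx hy with h | h <;> rw [hf x y hx hy] at h
    · left; linarith
    · right; linarith
  -- a Boolean point where φ is nonzero
  obtain ⟨y₀, hy₀b, hy₀⟩ : ∃ y, (∀ j, y j = 1 ∨ y j = -1) ∧ φ y ≠ 0 := by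
    rcases hφ with ⟨⟨y, hyb, hy⟩, -⟩ | ⟨⟨y, y', hyb, hy'b, hne⟩, -⟩
    · exact ⟨y, hyb, hy⟩
    · by_cases h : φ y = 0
      · exact ⟨y', hy'b, fun h' => hne (by rw [h, h'])⟩
      · exact ⟨y, hyb, h⟩
  by_cases hκ0 : ∀ i, κ i = 0
  · -- Case A : all κ are zero
    left
    -- a product of ±1's is ±1
    have hprodpm : ∀ x : Fin k → ℝ, (∀ i, x i = 1 ∨ x i = -1) →
        (∏ i, x i) = 1 ∨ (∏ i, x i) = -1 := by
      intro x hx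
      refine mul_self_eq_one_iff.mp ?_
      rw [← Finset.prod_mul_distrib]
      apply Finset.prod_eq_one
      intro i _
      rcases hx i with h | h <;> rw [h] <;> norm_num
    set i₀ : Fin k := ⟨0, hk⟩ with hi₀
    set e1 : Fin k → ℝ := fun _ => 1 with he1
    set em : Fin k → ℝ := Function.update e1 i₀ (-1) with hem
    have he1b : ∀ i, e1 i = 1 ∨ e1 i = -1 := fun i => Or.inl rfl
    have hemb : ∀ i, em i = 1 ∨ em i = -1 := by
      intro i
      by_cases h : i = i₀
      · subst h; right; simp [hem]
      · left; simp [hem, Function.update_of_ne h, he1]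
    have hpe1 : ∏ i, (e1 i + κ i) = 1 := by
      apply Finset.prod_eq_one; intro i _; rw [hκ0 i]; simp [he1]
    have hpem : ∏ i, (em i + κ i) = -1 := by
      have : (fun i => em i + κ i) = Function.update (fun i => e1 i + κ i) i₀ (-1) := by
        funext i
        by_cases h : i = i₀
        · subst h; simp [hem, hκ0]
        · simp [hem, Function.update_of_ne h]
      calc ∏ i, (em i + κ i) = ∏ i, Function.update (fun i => e1 i + κ i) i₀ (-1) i := by
              rw [this]
        _ = (-1) * ∏ i ∈ univ.erase i₀, (e1 i + κ i) := by
              rw [Finset.prod_update_of_mem (mem_univ i₀)]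
              rw [Finset.sdiff_singleton_eq_erase]
        _ = -1 := by
              rw [Finset.prod_eq_one (fun i _ => by rw [hκ0 i]; simp [he1])]
              ring
    have ku := key e1 y₀ he1b hy₀b
    have km := key em y₀ hemb hy₀b
    rw [hpe1] at ku
    rw [hpem] at km
    have hne : φ y₀ * 1 ≠ φ y₀ * (-1) := by
      intro h; apply hy₀; nlinarith
    have hB0 : B = 0 := by
      have := (pm_pair ku km hne).1
      nlinarith
    have hφpm : ∀ y : Fin (n - k) → ℝ, (∀ j, y j = 1 ∨ y j = -1) → (φ y = 1 ∨ φ y = -1) := by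
      intro y hy
      have := key e1 y he1b hy
      rw [hpe1, hB0] at this
      rcases this with h | h
      · left; linarith
      · right; linarith
    refine ⟨hκ0, hB0, hφpm, ?_⟩
    intro x y hx hy
    rw [hf x y hx hy, hB0]
    have : ∏ i, (x i + κ i) = ∏ i, x i := by
      apply Finset.prod_congr rfl; intro i _; rw [hκ0 i]; ring
    rw [this]; ring
  · -- Case B : some κ is nonzero
    right
    push_neg at hκ0
    obtain ⟨i₀, hi₀⟩ := hκ0
    -- a Boolean point where all factors are nonzero
    set xs : Fin k → ℝ := fun j => if κ j = -1 then -1 else 1 with hxs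
    have hxsb : ∀ i, xs i = 1 ∨ xs i = -1 := by
      intro i; by_cases h : κ i = -1 <;> simp [hxs, h]
    have hxsf : ∀ i, xs i + κ i ≠ 0 := by
      intro i
      by_cases h : κ i = -1
      · simp [hxs, h]
      · simp only [hxs, if_neg h]
        intro heq; apply h; linarith
    -- the flip lemma
    have flip : ∀ (x : Fin k → ℝ) (j : Fin k), (∀ i, x i = 1 ∨ x i = -1) →
        ∀ Q : ℝ, Q = ∏ i ∈ univ.erase j, (x i + κ i) → Q ≠ 0 →
        (φ y₀ * Q) ^ 2 = 1 ∧ κ j * (φ y₀ * Q) = B := by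
      intro x j hx Q hQdef hQ
      set x' : Fin k → ℝ := Function.update x j (-(x j)) with hx'
      have hx'b : ∀ i, x' i = 1 ∨ x' i = -1 := by
        intro i
        by_cases h : i = j
        · subst h
          rcases hx i with h | h <;> simp [hx', h]
        · simpa [hx', Function.update_of_ne h] using hx i
      have hgx : ∏ i, (x i + κ i) = (x j + κ j) * Q := by
        rw [hQdef]
        exact (Finset.mul_prod_erase _ _ (mem_univ j)).symm
      have hgx' : ∏ i, (x' i + κ i) = (-(x j) + κ j) * Q := by
        have heq : (fun i => x' i + κ i)
            = Function.update (fun i => x i + κ i) j (-(x j) + κ j) := by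
          funext i
          by_cases h : i = j
          · subst h; simp [hx']
          · simp [hx', Function.update_of_ne h]
        calc ∏ i, (x' i + κ i)
            = ∏ i, Function.update (fun i => x i + κ i) j (-(x j) + κ j) i := by rw [heq]
          _ = (-(x j) + κ j) * ∏ i ∈ univ.erase j, (x i + κ i) := by
              rw [Finset.prod_update_of_mem (mem_univ j), Finset.sdiff_singleton_eq_erase]
          _ = (-(x j) + κ j) * Q := by rw [hQdef]
      have ku := key x y₀ hx hy₀b
      have kv := key x' y₀ hx'b hy₀b
      rw [hgx] at ku
      rw [hgx'] at kv
      have hxj : x j ≠ 0 := by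
        rcases hx j with h | h <;> rw [h] <;> norm_num
      have hne : φ y₀ * ((x j + κ j) * Q) ≠ φ y₀ * ((-(x j) + κ j) * Q) := by
        intro h
        have h1 := mul_left_cancel₀ hy₀ h
        have h2 := mul_right_cancel₀ hQ h1
        apply hxj; linarith
      obtain ⟨hsum, hsq⟩ := pm_pair ku kv hne
      constructor
      · rcases hx j with h | h <;> rw [h] at hsq <;> linear_combination hsq / 4
      · linear_combination hsum / 2
    -- basic consequences at the point xs
    have hQf : ∀ j : Fin k, (∏ i ∈ univ.erase j, (xs i + κ i)) ≠ 0 := by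
      intro j
      exact Finset.prod_ne_zero_iff.mpr fun i _ => hxsf i
    have E : ∀ j : Fin k, (φ y₀ * ∏ i ∈ univ.erase j, (xs i + κ i)) ^ 2 = 1 ∧
        κ j * (φ y₀ * ∏ i ∈ univ.erase j, (xs i + κ i)) = B :=
      fun j => flip xs j hxsb _ rfl (hQf j)
    have hBne : B ≠ 0 := by
      intro hB0
      have h1 := (E i₀).1
      have h2 := (E i₀).2
      rw [hB0] at h2
      rcases mul_eq_zero.mp h2 with h | h
      · exact hi₀ h
      · rw [h] at h1; norm_num at h1
    have hκne : ∀ j, κ j ≠ 0 := by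
      intro j h
      apply hBne
      have h2 := (E j).2
      rw [h] at h2; linarith
    have hκB : ∀ j, κ j ^ 2 = B ^ 2 := by
      intro j
      have h1 := (E j).1
      have h2 := (E j).2
      have : B ^ 2 = κ j ^ 2 * (φ y₀ * ∏ i ∈ univ.erase j, (xs i + κ i)) ^ 2 := by
        rw [← h2]; ring
      rw [this, h1, mul_one]
    -- B² = 1
    have hB1 : B ^ 2 = 1 := by
      by_contra hB2
      -- all factors are everywhere nonzero
      have hfne : ∀ (x : Fin k → ℝ), (∀ i, x i = 1 ∨ x i = -1) → ∀ i, x i + κ i ≠ 0 := by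
        intro x hx i heq
        apply hB2
        rw [← hκB i]
        rcases hx i with h | h <;> rw [h] at heq <;> nlinarith
      rcases hφ with ⟨-, hk2⟩ | ⟨⟨y, y', hyb, hy'b, hne⟩, -⟩
      · -- k ≥ 2 case
        set a : Fin k := ⟨0, by omega⟩ with ha
        set b : Fin k := ⟨1, by omega⟩ with hb
        have hab : a ≠ b := by
          intro h
          have := congrArg Fin.val h
          simp [ha, hb] at this
        have hamem : a ∈ univ.erase b := mem_erase.mpr ⟨hab, mem_univ a⟩
        set xs' : Fin k → ℝ := Function.update xs a (-(xs a)) with hxs'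
        have hxs'b : ∀ i, xs' i = 1 ∨ xs' i = -1 := by
          intro i
          rcases eq_or_ne i a with h | h
          · rw [h]; rcases hxsb a with h' | h' <;> simp [hxs', h']
          · simpa [hxs', Function.update_of_ne h] using hxsb i
        have hQ'ne : (∏ i ∈ univ.erase b, (xs' i + κ i)) ≠ 0 :=
          Finset.prod_ne_zero_iff.mpr fun i _ => hfne xs' hxs'b i
        have F1 := (flip xs b hxsb _ rfl (hQf b)).2
        have F2 := (flip xs' b hxs'b _ rfl hQ'ne).2
        have hQQ : (∏ i ∈ univ.erase b, (xs i + κ i)) = ∏ i ∈ univ.erase b, (xs' i + κ i) := by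
          have h1 : κ b * (φ y₀ * ∏ i ∈ univ.erase b, (xs i + κ i))
              = κ b * (φ y₀ * ∏ i ∈ univ.erase b, (xs' i + κ i)) := by rw [F1, F2]
          exact mul_left_cancel₀ hy₀ (mul_left_cancel₀ (hκne b) h1)
        -- decompose both products
        have hdec1 : ∏ i ∈ univ.erase b, (xs i + κ i)
            = (xs a + κ a) * ∏ i ∈ (univ.erase b).erase a, (xs i + κ i) :=
          (Finset.mul_prod_erase _ _ hamem).symm
        have hdec2 : ∏ i ∈ univ.erase b, (xs' i + κ i)
            = (-(xs a) + κ a) * ∏ i ∈ (univ.erase b).erase a, (xs i + κ i) := by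
          have heq : (fun i => xs' i + κ i)
              = Function.update (fun i => xs i + κ i) a (-(xs a) + κ a) := by
            funext i
            by_cases h : i = a
            · subst h; simp [hxs']
            · simp [hxs', Function.update_of_ne h]
          calc ∏ i ∈ univ.erase b, (xs' i + κ i)
              = ∏ i ∈ univ.erase b, Function.update (fun i => xs i + κ i) a (-(xs a) + κ a) i := by
                rw [heq]
            _ = (-(xs a) + κ a) * ∏ i ∈ (univ.erase b).erase a, (xs i + κ i) := by
                rw [Finset.prod_update_of_mem hamem, Finset.sdiff_singleton_eq_erase]
        have hT : (∏ i ∈ (univ.erase b).erase a, (xs i + κ i)) ≠ 0 :=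
          Finset.prod_ne_zero_iff.mpr fun i _ => hxsf i
        rw [hdec1, hdec2] at hQQ
        have := mul_right_cancel₀ hT hQQ
        have hxa : xs a = 0 := by linarith
        rcases hxsb a with h | h <;> rw [h] at hxa <;> norm_num at hxa
      · -- nonconstant φ case
        have hgne : ∀ (x : Fin k → ℝ), (∀ i, x i = 1 ∨ x i = -1) →
            (∏ i, (x i + κ i)) ≠ 0 :=
          fun x hx => Finset.prod_ne_zero_iff.mpr fun i _ => hfne x hx i
        have sum2B : ∀ (x : Fin k → ℝ), (∀ i, x i = 1 ∨ x i = -1) →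
            (φ y + φ y') * ∏ i, (x i + κ i) = 2 * B := by
          intro x hx
          have ku := key x y hx hyb
          have kv := key x y' hx hy'b
          have hd : φ y * ∏ i, (x i + κ i) ≠ φ y' * ∏ i, (x i + κ i) := by
            intro h
            exact hne (mul_right_cancel₀ (hgne x hx) h)
          have := (pm_pair ku kv hd).1
          linear_combination this
        set j₀ : Fin k := ⟨0, hk⟩ with hj₀
        set xs' : Fin k → ℝ := Function.update xs j₀ (-(xs j₀)) with hxs'
        have hxs'b : ∀ i, xs' i = 1 ∨ xs' i = -1 := by
          intro i
          rcases eq_or_ne i j₀ with h | h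
          · rw [h]; rcases hxsb j₀ with h' | h' <;> simp [hxs', h']
          · simpa [hxs', Function.update_of_ne h] using hxsb i
        have hgx : ∏ i, (xs i + κ i)
            = (xs j₀ + κ j₀) * ∏ i ∈ univ.erase j₀, (xs i + κ i) :=
          (Finset.mul_prod_erase _ _ (mem_univ j₀)).symm
        have hgx' : ∏ i, (xs' i + κ i)
            = (-(xs j₀) + κ j₀) * ∏ i ∈ univ.erase j₀, (xs i + κ i) := by
          have heq : (fun i => xs' i + κ i)
              = Function.update (fun i => xs i + κ i) j₀ (-(xs j₀) + κ j₀) := by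
            funext i
            by_cases h : i = j₀
            · subst h; simp [hxs']
            · simp [hxs', Function.update_of_ne h]
          calc ∏ i, (xs' i + κ i)
              = ∏ i, Function.update (fun i => xs i + κ i) j₀ (-(xs j₀) + κ j₀) i := by rw [heq]
            _ = (-(xs j₀) + κ j₀) * ∏ i ∈ univ.erase j₀, (xs i + κ i) := by
                rw [Finset.prod_update_of_mem (mem_univ j₀), Finset.sdiff_singleton_eq_erase]
        have h1 := sum2B xs hxsb
        have h2 := sum2B xs' hxs'b
        have hs : φ y + φ y' ≠ 0 := by
          intro h; rw [h] at h1; simp at h1; exact hBne (by linarith)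
        have hQQ : ∏ i, (xs i + κ i) = ∏ i, (xs' i + κ i) :=
          mul_left_cancel₀ hs (h1.trans h2.symm)
        rw [hgx, hgx'] at hQQ
        have := mul_right_cancel₀ (hQf j₀) hQQ
        have hxa : xs j₀ = 0 := by linarith
        rcases hxsb j₀ with h | h <;> rw [h] at hxa <;> norm_num at hxa
    -- conclude B = ±1, κ = ±1
    have hBpm : B = 1 ∨ B = -1 := by
      have : (B - 1) * (B + 1) = 0 := by linear_combination hB1
      rcases mul_eq_zero.mp this with h | h
      · left; linarith
      · right; linarith
    have hκpm : ∀ i, κ i = 1 ∨ κ i = -1 := by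
      intro i
      have : (κ i - 1) * (κ i + 1) = 0 := by linear_combination (hκB i).trans hB1
      rcases mul_eq_zero.mp this with h | h
      · left; linarith
      · right; linarith
    refine ⟨hκpm, hBpm, fun y => φ y * (∏ i, κ i) * 2 ^ k / (2 * B), ?_, ?_⟩
    · -- values of φt
      intro y hy
      have hκprod : ∏ i, (κ i + κ i) = 2 ^ k * ∏ i, κ i := by
        calc ∏ i, (κ i + κ i) = ∏ i, (2 * κ i) := by
              apply Finset.prod_congr rfl; intro i _; ring
          _ = (∏ _i : Fin k, (2:ℝ)) * ∏ i, κ i := by rw [Finset.prod_mul_distrib]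
          _ = 2 ^ k * ∏ i, κ i := by rw [Finset.prod_const]; simp
      have hkey := key κ y hκpm hy
      rw [hκprod] at hkey
      have h2k : (2:ℝ) ^ k ≠ 0 := by positivity
      rcases hBpm with hB | hB <;> rw [hB] at hkey ⊢ <;> rcases hkey with h | h
      · right
        rw [div_eq_one_iff_eq (by norm_num)]
        linear_combination h
      · left
        rw [div_eq_zero_iff]; left
        linear_combination h
      · left
        rw [div_eq_zero_iff]; left
        linear_combination h
      · right
        rw [div_eq_one_iff_eq (by norm_num)]
        linear_combination h
    · -- the formula
      intro x y hx hy
      rw [hf x y hx hy]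
      have h1 : ∏ i, (x i + κ i) = (∏ i, κ i) * ∏ i, (κ i * x i + 1) := by
        calc ∏ i, (x i + κ i) = ∏ i, (κ i * (κ i * x i + 1)) := by
              apply Finset.prod_congr rfl
              intro i _
              rcases hκpm i with h | h <;> rw [h] <;> ring
          _ = (∏ i, κ i) * ∏ i, (κ i * x i + 1) := Finset.prod_mul_distrib
      have h2 : ∏ i, ((κ i * x i + 1) / 2) = (∏ i, (κ i * x i + 1)) / 2 ^ k := by
        rw [Finset.prod_div_distrib, Finset.prod_const]
        simp
      rw [h1, h2]
      have h2k : (2:ℝ) ^ k ≠ 0 := by positivity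
      field_simp
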